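/- Let ν, L, T > 0, let f_norm ≥ 0, and let e, w : [0,T] → ℝ be nonnegative functions with e continuous on [0,T] and differentiable on (0,T) and w integrable, such that for every t ∈ (0,T), (1/2)·e′(t) ≤ −ν·w(t) + f_norm·√(e(t)). Define U₀ ≥ 0 by U₀² = L^{−3}·(1/T)∫₀^T e(t) dt, and set f_rms = L^{−3/2}·f_norm, Gr = L³·f_rms·ν^{−2}, Re = U₀·L·ν^{−1}, and ϖ₀ = ν·L^{−2}. Then L^{−3}·(1/T)∫₀^T w(t) dt ≤ ϖ₀²·Gr·Re + e(0)/(2·ν·L³·T). -/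

import Mathlib

open MeasureTheory

private lemma sqrt_le_aux (x c : ℝ) (hx : 0 ≤ x) (hc : 0 < c) :
    Real.sqrt x ≤ x / (2*c) + c / 2 := by
  have h2 : Real.sqrt x ^ 2 = x := Real.sq_sqrt hx
  have h3 : 0 ≤ Real.sqrt x := Real.sqrt_nonneg _
  rw [div_add_div _ _ (by positivity) (by positivity), le_div_iff₀ (by positivity)]
  nlinarith [sq_nonneg (Real.sqrt x - c)]

/-- Inequality (8) of the paper, `⟨Ω₁²⟩_T ≤ ϖ₀² Gr Re + O(T⁻¹)`, with the
time-dependent norms abstracted: `e(t)` stands for `‖u(t)‖₂²`, `w(t)` for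
`‖ω(t)‖₂²`, and `f_norm` for `‖f‖₂`. -/
theorem stmt_5 (ν L T : ℝ) (hν : 0 < ν) (hL : 0 < L) (hT : 0 < T)
    (f_norm : ℝ) (hf : 0 ≤ f_norm)
    (e w : ℝ → ℝ)
    (henn : ∀ t ∈ Set.Icc (0 : ℝ) T, 0 ≤ e t)
    (hwnn : ∀ t ∈ Set.Icc (0 : ℝ) T, 0 ≤ w t)
    (hecont : ContinuousOn e (Set.Icc 0 T))
    (hediff : ∀ t ∈ Set.Ioo (0 : ℝ) T, DifferentiableAt ℝ e t)
    (hwint : IntervalIntegrable w volume 0 T)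
    (hineq : ∀ t ∈ Set.Ioo (0 : ℝ) T,
      (1 / 2) * deriv e t ≤ -ν * w t + f_norm * Real.sqrt (e t))
    (U₀ f_rms Gr Re ϖ₀ : ℝ) (hU₀ : 0 ≤ U₀)
    (hU₀sq : U₀ ^ 2 = L ^ (-3 : ℝ) * ((1 / T) * ∫ t in (0 : ℝ)..T, e t))
    (hfrms : f_rms = L ^ (-(3 : ℝ) / 2) * f_norm)
    (hGr : Gr = L ^ 3 * f_rms * ν⁻¹ ^ 2)
    (hRe : Re = U₀ * L * ν⁻¹)
    (hϖ₀ : ϖ₀ = ν * L ^ (-2 : ℝ)) :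
    L ^ (-3 : ℝ) * ((1 / T) * ∫ t in (0 : ℝ)..T, w t) ≤
      ϖ₀ ^ 2 * Gr * Re + e 0 / (2 * ν * L ^ 3 * T) := by
  have hT0 : (0:ℝ) ≤ T := hT.le
  -- integrability of the various functions
  have hsqrt_cont : ContinuousOn (fun t => Real.sqrt (e t)) (Set.Icc 0 T) :=
    Real.continuous_sqrt.comp_continuousOn hecont
  have huIcc : Set.uIcc (0:ℝ) T = Set.Icc 0 T := Set.uIcc_of_le hT0
  have hsint : IntervalIntegrable (fun t => Real.sqrt (e t)) volume 0 T :=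
    (huIcc ▸ hsqrt_cont).intervalIntegrable
  have heint : IntervalIntegrable e volume 0 T :=
    (huIcc ▸ hecont).intervalIntegrable
  -- integrate the differential inequality
  have hφint : IntegrableOn (fun t => -(2*ν) * w t + (2*f_norm) * Real.sqrt (e t))
      (Set.Icc 0 T) volume := by
    rw [← intervalIntegrable_iff_integrableOn_Icc_of_le hT0]
    exact (hwint.const_mul _).add (hsint.const_mul _)
  have key : e T - e 0 ≤ ∫ t in (0:ℝ)..T, (-(2*ν) * w t + (2*f_norm) * Real.sqrt (e t)) := by
    apply intervalIntegral.sub_le_integral_of_hasDeriv_right_of_le hT0 hecont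
      (g' := deriv e) ?_ hφint ?_
    · intro x hx
      exact ((hediff x hx).hasDerivAt.hasDerivWithinAt)
    · intro x hx
      have := hineq x hx
      linarith [this]
  have hsplit : (∫ t in (0:ℝ)..T, (-(2*ν) * w t + (2*f_norm) * Real.sqrt (e t)))
      = -(2*ν) * (∫ t in (0:ℝ)..T, w t) + (2*f_norm) * ∫ t in (0:ℝ)..T, Real.sqrt (e t) := by
    rw [intervalIntegral.integral_add (hwint.const_mul _) (hsint.const_mul _),
      intervalIntegral.integral_const_mul, intervalIntegral.integral_const_mul]
  set A := ∫ t in (0:ℝ)..T, w t with hA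
  set S := ∫ t in (0:ℝ)..T, Real.sqrt (e t) with hS
  set E := ∫ t in (0:ℝ)..T, e t with hE
  have heT : 0 ≤ e T := henn T ⟨hT0, le_rfl⟩
  have he0 : 0 ≤ e 0 := henn 0 ⟨le_rfl, hT0⟩
  have step1 : ν * A ≤ f_norm * S + e 0 / 2 := by
    rw [hsplit] at key; linarith [key]
  -- E = T * L^3 * U₀^2
  set s := Real.sqrt (L^3) with hs
  have hspos : 0 < s := Real.sqrt_pos.2 (by positivity)
  have hsq : s ^ 2 = L ^ 3 := Real.sq_sqrt (by positivity)
  have hLr : L ^ (-3 : ℝ) = (L ^ 3)⁻¹ := by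
    rw [show (-3:ℝ) = -((3:ℕ):ℝ) by norm_num, Real.rpow_neg hL.le, Real.rpow_natCast]
  have hL2 : L ^ (-2 : ℝ) = (L ^ 2)⁻¹ := by
    rw [show (-2:ℝ) = -((2:ℕ):ℝ) by norm_num, Real.rpow_neg hL.le, Real.rpow_natCast]
  have hL32 : L ^ (-(3:ℝ)/2) = s⁻¹ := by
    have h1 : s = L ^ ((3:ℝ)/2) := by
      rw [hs, show ((L:ℝ)^3) = L ^ ((3:ℝ)) by
        rw [show (3:ℝ) = ((3:ℕ):ℝ) by norm_num, Real.rpow_natCast],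
        Real.sqrt_eq_rpow, ← Real.rpow_mul hL.le]
      norm_num
    rw [show -(3:ℝ)/2 = -((3:ℝ)/2) by ring, Real.rpow_neg hL.le, h1]
  have hE_eq : E = T * L ^ 3 * U₀ ^ 2 := by
    rw [hU₀sq, hLr]
    field_simp
  -- Cauchy-Schwarz style bound: S ≤ T * s * U₀, via √x ≤ x/(2c) + c/2
  have hSbound : ∀ c : ℝ, 0 < c → S ≤ E / (2 * c) + c * T / 2 := by
    intro c hc
    have pt : ∀ t ∈ Set.Icc (0:ℝ) T, Real.sqrt (e t) ≤ e t / (2*c) + c/2 :=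
      fun t ht => sqrt_le_aux (e t) c (henn t ht) hc
    calc S ≤ ∫ t in (0:ℝ)..T, (e t/(2*c) + c/2) :=
          intervalIntegral.integral_mono_on hT0 hsint
            ((heint.div_const (2*c)).add intervalIntegrable_const) pt
      _ = E/(2*c) + c*T/2 := by
          rw [intervalIntegral.integral_add (heint.div_const (2*c)) intervalIntegrable_const,
            intervalIntegral.integral_div, intervalIntegral.integral_const]
          simp [smul_eq_mul]
          ring
  have hSU : S ≤ T * (s * U₀) := by
    rcases eq_or_lt_of_le hU₀ with h0 | h0
    · have hE0 : E = 0 := by rw [hE_eq, ← h0]; ring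
      have hεS : ∀ ε : ℝ, 0 < ε → S ≤ ε := by
        intro ε hε
        have h1 := hSbound (2 * ε / T) (by positivity)
        rw [hE0] at h1
        have h2 : (0:ℝ) / (2 * (2*ε/T)) + (2*ε/T) * T / 2 = ε := by
          rw [zero_div, zero_add]
          field_simp
        linarith [h1, h2.le, h2.ge]
      have hS0 : S ≤ 0 := le_of_forall_pos_le_add (by intro ε hε; simpa using hεS ε hε)
      calc S ≤ 0 := hS0
        _ ≤ _ := by positivity
    · have hc : 0 < s * U₀ := by positivity
      have h1 := hSbound _ hc
      calc S ≤ E / (2 * (s * U₀)) + (s * U₀) * T / 2 := h1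
        _ = T * (s * U₀) := by
            rw [hE_eq, ← hsq]
            field_simp
            ring
  -- final algebra
  have final : ν * A ≤ f_norm * (T * (s * U₀)) + e 0 / 2 :=
    step1.trans (by linarith [mul_le_mul_of_nonneg_left hSU hf])
  rw [hGr, hRe, hϖ₀, hfrms, hLr, hL2, hL32]
  have hsinv : s⁻¹ = s / L ^ 3 := by
    rw [← hsq, sq]
    field_simp
  have hRHS : (ν * (L ^ 2)⁻¹) ^ 2 * (L ^ 3 * (s⁻¹ * f_norm) * ν⁻¹ ^ 2) * (U₀ * L * ν⁻¹)
      = s⁻¹ * f_norm * U₀ * ν⁻¹ := by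
    field_simp
  rw [hRHS]
  calc (L^3)⁻¹ * (1/T * A) = (ν * A) / (ν * T * L^3) := by
        field_simp
    _ ≤ (f_norm * (T * (s * U₀)) + e 0 / 2) / (ν * T * L^3) := by
        gcongr
    _ = s⁻¹ * f_norm * U₀ * ν⁻¹ + e 0 / (2 * ν * L ^ 3 * T) := by
        rw [hsinv]
        field_simp
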